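/- Let P₀, S, ρ, β, ω be positive real numbers with ω ≠ β, and set t₀ = π/ω. Let U be the piecewise function equal to P₀·(ω·sin(βt) − β·sin(ωt)) / (S·ρ·β·(ω² − β²)) for 0 ≤ t ≤ t₀ and equal to P₀·ω·(sin(βt) + sin(β(t − t₀))) / (S·ρ·β·(ω² − β²)) for t > t₀. Then for every real p > 0, ∫₀^∞ e^{−pt}·U(t) dt = P₀·ω·(1 + e^{−p·t₀}) / (S·ρ·(p² + ω²)·(p² + β²)). -/

import Mathlib

open Real MeasureTheory Set Filter Topology

noncomputable def lapF (p c d : ℝ) : ℝ → ℝ := fun t =>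
  -Real.exp (-p*t) * (p * Real.sin (c*(t-d)) + c * Real.cos (c*(t-d))) / (p^2+c^2)

lemma lapF_deriv (p c d : ℝ) (hp : 0 < p) (t : ℝ) :
    HasDerivAt (lapF p c d) (Real.exp (-p*t) * Real.sin (c*(t-d))) t := by
  have hD : (0:ℝ) < p^2 + c^2 := by positivity
  have h1 : HasDerivAt (fun t : ℝ => Real.exp (-p*t)) (-p * Real.exp (-p*t)) t := by
    simpa [mul_comm] using ((hasDerivAt_id t).const_mul (-p)).exp
  have h2 : HasDerivAt (fun t : ℝ => c*(t-d)) c t := by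
    simpa using ((hasDerivAt_id t).sub_const d).const_mul c
  have hs : HasDerivAt (fun t : ℝ => Real.sin (c*(t-d))) (Real.cos (c*(t-d)) * c) t := h2.sin
  have hc : HasDerivAt (fun t : ℝ => Real.cos (c*(t-d))) (-Real.sin (c*(t-d)) * c) t := h2.cos
  have hG : HasDerivAt (fun t : ℝ => p * Real.sin (c*(t-d)) + c * Real.cos (c*(t-d)))
      (p * (Real.cos (c*(t-d)) * c) + c * (-Real.sin (c*(t-d)) * c)) t :=
    (hs.const_mul p).add (hc.const_mul c)
  have := ((h1.neg.mul hG).div_const (p^2+c^2))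
  refine this.congr_deriv ?_
  have hD' : p^2 + c^2 ≠ 0 := hD.ne'
  rw [div_eq_iff hD', Pi.neg_apply]
  ring

lemma laplace_sin_integrable (p c d a : ℝ) (hp : 0 < p) :
    IntegrableOn (fun t => Real.exp (-p*t) * Real.sin (c*(t-d))) (Ioi a) := by
  refine (exp_neg_integrableOn_Ioi a hp).mono' ?_ ?_
  · exact (Continuous.mul (by continuity) (by continuity)).aestronglyMeasurable
  · filter_upwards with t
    rw [norm_mul, Real.norm_eq_abs, Real.norm_eq_abs, abs_exp]
    calc Real.exp (-p*t) * |Real.sin (c*(t-d))| ≤ Real.exp (-p*t) * 1 :=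
          mul_le_mul_of_nonneg_left (abs_sin_le_one _) (exp_pos _).le
      _ = Real.exp (-p*t) := mul_one _

lemma laplace_sin_Ioi (p c d a : ℝ) (hp : 0 < p) :
    ∫ t in Ioi a, Real.exp (-p*t) * Real.sin (c*(t-d)) =
      Real.exp (-p*a) * (p * Real.sin (c*(a-d)) + c * Real.cos (c*(a-d))) / (p^2+c^2) := by
  have hD : (0:ℝ) < p^2 + c^2 := by positivity
  have hint := laplace_sin_integrable p c d a hp
  have htendexp : Tendsto (fun t : ℝ => Real.exp (-p*t)) atTop (𝓝 0) := by
    have h1 : Tendsto (fun t : ℝ => p * t) atTop atTop := tendsto_id.const_mul_atTop hp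
    have h2 := Real.tendsto_exp_neg_atTop_nhds_zero.comp h1
    exact h2.congr fun t => by simp [Function.comp, neg_mul]
  have htend : Tendsto (lapF p c d) atTop (𝓝 0) := by
    have hb : ∀ t, ‖lapF p c d t‖ ≤ Real.exp (-p*t) * (p + |c|) / (p^2+c^2) := by
      intro t
      simp only [lapF]
      rw [Real.norm_eq_abs, abs_div, abs_of_pos hD, div_le_div_iff_of_pos_right hD, abs_mul,
        abs_neg, abs_exp]
      refine mul_le_mul_of_nonneg_left ?_ (exp_pos _).le
      calc |p * Real.sin (c*(t-d)) + c * Real.cos (c*(t-d))|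
          ≤ |p * Real.sin (c*(t-d))| + |c * Real.cos (c*(t-d))| := abs_add_le _ _
        _ ≤ p + |c| := by
            rw [abs_mul, abs_mul]
            gcongr
            · rw [abs_of_pos hp]
              exact mul_le_of_le_one_right hp.le (abs_sin_le_one _)
            · exact mul_le_of_le_one_right (abs_nonneg _) (abs_cos_le_one _)
    exact squeeze_zero_norm hb (by simpa using (htendexp.mul_const (p + |c|)).div_const (p^2+c^2))
  have := integral_Ioi_of_hasDerivAt_of_tendsto'
    (f := lapF p c d) (f' := fun t => Real.exp (-p*t) * Real.sin (c*(t-d)))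
    (fun x _ => lapF_deriv p c d hp x) hint htend
  rw [this]
  simp only [lapF]
  field_simp
  ring

lemma laplace_sin_fin (p c d a b : ℝ) (hp : 0 < p) :
    ∫ t in a..b, Real.exp (-p*t) * Real.sin (c*(t-d)) = lapF p c d b - lapF p c d a := by
  refine intervalIntegral.integral_eq_sub_of_hasDerivAt (fun t _ => lapF_deriv p c d hp t) ?_
  exact (Continuous.mul (by continuity) (by continuity)).intervalIntegrable a b


lemma laplace_sin_Ioc (p c d a b : ℝ) (hp : 0 < p) (hab : a ≤ b) :
    ∫ t in Ioc a b, Real.exp (-p*t) * Real.sin (c*(t-d)) = lapF p c d b - lapF p c d a := by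
  rw [← intervalIntegral.integral_of_le hab]
  exact laplace_sin_fin p c d a b hp

lemma laplace_sin_integrableOn_Ioc (p c d a b : ℝ) :
    IntegrableOn (fun t => Real.exp (-p*t) * Real.sin (c*(t-d))) (Ioc a b) :=
  (Continuous.mul (by continuity) (by continuity)).integrableOn_Ioc

theorem stmt_4 (P₀ S ρ β ω : ℝ) (hP₀ : 0 < P₀) (hS : 0 < S) (hρ : 0 < ρ)
    (hβ : 0 < β) (hω : 0 < ω) (hne : ω ≠ β)
    (t₀ : ℝ) (ht₀ : t₀ = Real.pi / ω)
    (U : ℝ → ℝ)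
    (hU : U = fun t =>
      if t ≤ t₀ then
        P₀ * (ω * Real.sin (β * t) - β * Real.sin (ω * t)) / (S * ρ * β * (ω ^ 2 - β ^ 2))
      else
        P₀ * ω * (Real.sin (β * t) + Real.sin (β * (t - t₀))) / (S * ρ * β * (ω ^ 2 - β ^ 2)))
    (p : ℝ) (hp : 0 < p) :
    ∫ t in Set.Ioi (0 : ℝ), Real.exp (-p * t) * U t =
      P₀ * ω * (1 + Real.exp (-p * t₀)) / (S * ρ * (p ^ 2 + ω ^ 2) * (p ^ 2 + β ^ 2)) := by
  have ht₀pos : 0 < t₀ := ht₀ ▸ div_pos Real.pi_pos hω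
  have hωt₀ : ω * t₀ = Real.pi := by rw [ht₀]; field_simp
  have hsub : ω ^ 2 - β ^ 2 ≠ 0 := by
    intro h
    apply hne
    nlinarith [sq_nonneg (ω - β), sq_nonneg (ω + β)]
  set A : ℝ := P₀ / (S * ρ * β * (ω ^ 2 - β ^ 2)) with hA
  -- the two integrands
  set g1 : ℝ → ℝ := fun t => (A * ω) * (Real.exp (-p*t) * Real.sin (β*(t-0)))
      + (-(A * β)) * (Real.exp (-p*t) * Real.sin (ω*(t-0))) with hg1
  set g2 : ℝ → ℝ := fun t => (A * ω) * (Real.exp (-p*t) * Real.sin (β*(t-0)))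
      + (A * ω) * (Real.exp (-p*t) * Real.sin (β*(t-t₀))) with hg2
  have hfg1 : EqOn (fun t => Real.exp (-p * t) * U t) g1 (Ioc 0 t₀) := by
    intro t ht
    simp only [hU, hg1, if_pos ht.2, sub_zero]
    ring
  have hfg2 : EqOn (fun t => Real.exp (-p * t) * U t) g2 (Ioi t₀) := by
    intro t ht
    simp only [hU, hg2, if_neg (not_le.mpr (show t₀ < t from ht)), sub_zero]
    ring
  have hi1β := laplace_sin_integrableOn_Ioc p β 0 0 t₀
  have hi1ω := laplace_sin_integrableOn_Ioc p ω 0 0 t₀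
  have hi2β := laplace_sin_integrable p β 0 t₀ hp
  have hi2β' := laplace_sin_integrable p β t₀ t₀ hp
  have hint1 : IntegrableOn g1 (Ioc 0 t₀) := by
    exact ((hi1β.const_mul _).add (hi1ω.const_mul _))
  have hint2 : IntegrableOn g2 (Ioi t₀) := by
    exact ((hi2β.const_mul _).add (hi2β'.const_mul _))
  have hsplit : (Ioc (0:ℝ) t₀) ∪ (Ioi t₀) = Ioi (0:ℝ) := Ioc_union_Ioi_eq_Ioi ht₀pos.le
  have key : (∫ t in Set.Ioi (0:ℝ), Real.exp (-p * t) * U t)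
      = (∫ t in Ioc 0 t₀, g1 t) + ∫ t in Ioi t₀, g2 t := by
    rw [← hsplit, setIntegral_union (Ioc_disjoint_Ioi le_rfl) measurableSet_Ioi
      (hint1.congr_fun hfg1.symm measurableSet_Ioc)
      (hint2.congr_fun hfg2.symm measurableSet_Ioi)]
    rw [setIntegral_congr_fun measurableSet_Ioc hfg1,
      setIntegral_congr_fun measurableSet_Ioi hfg2]
  rw [key]
  have e1 : (∫ t in Ioc 0 t₀, g1 t)
      = (A * ω) * (lapF p β 0 t₀ - lapF p β 0 0)
        + (-(A * β)) * (lapF p ω 0 t₀ - lapF p ω 0 0) := by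
    rw [hg1, integral_add (hi1β.const_mul _) (hi1ω.const_mul _),
      integral_const_mul, integral_const_mul,
      laplace_sin_Ioc p β 0 0 t₀ hp ht₀pos.le, laplace_sin_Ioc p ω 0 0 t₀ hp ht₀pos.le]
  have e2 : (∫ t in Ioi t₀, g2 t)
      = (A * ω) * (Real.exp (-p*t₀) * (p * Real.sin (β*(t₀-0)) + β * Real.cos (β*(t₀-0))) / (p^2+β^2))
        + (A * ω) * (Real.exp (-p*t₀) * (p * Real.sin (β*(t₀-t₀)) + β * Real.cos (β*(t₀-t₀))) / (p^2+β^2)) := by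
    rw [hg2, integral_add (hi2β.const_mul _) (hi2β'.const_mul _),
      integral_const_mul, integral_const_mul,
      laplace_sin_Ioi p β 0 t₀ hp, laplace_sin_Ioi p β t₀ t₀ hp]
  rw [e1, e2]
  simp only [lapF, hA, sub_zero, sub_self, mul_zero, Real.sin_zero, Real.cos_zero,
    neg_zero, Real.exp_zero, hωt₀, Real.sin_pi, Real.cos_pi]
  have hDβ : (p:ℝ)^2 + β^2 ≠ 0 := by positivity
  have hDω : (p:ℝ)^2 + ω^2 ≠ 0 := by positivity
  field_simp
  ring
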